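/- The step function f : [0,1] → ℝ defined by f(x) = 1 if x > 1/2 and f(x) = 0 otherwise satisfies V(f) = 1, ‖f‖_s = ∞, and ‖f‖_w = 2; in particular f witnesses tightness of the inequality ‖f‖_w ≤ 2·V(f). -/

import Mathlib

open MeasureTheory Set ENNReal

/-- The local slope of `f` at `x`: `Λ_f(x) = sup_{x' ∈ [0,1], x' ≠ x} |f(x) − f(x')|/|x − x'|`,
valued in `[0,∞]`. -/
noncomputable def locSlope (f : ℝ → ℝ) (x : ℝ) : ℝ≥0∞ :=
  ⨆ (x' : ℝ) (_ : x' ∈ Set.Icc (0:ℝ) 1) (_ : x' ≠ x),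
    ENNReal.ofReal (|f x - f x'| / |x - x'|)

/-- Strong average smoothness: `‖f‖_s = ∫_{[0,1]} Λ_f(x) dx`. -/
noncomputable def strongNorm (f : ℝ → ℝ) : ℝ≥0∞ :=
  ∫⁻ x in Set.Icc (0:ℝ) 1, locSlope f x

/-- Weak average smoothness: `‖f‖_w = sup_{t>0} t·λ({x ∈ [0,1] : Λ_f(x) ≥ t})`. -/
noncomputable def weakNorm (f : ℝ → ℝ) : ℝ≥0∞ :=
  ⨆ (t : ℝ) (_ : 0 < t),
    ENNReal.ofReal t * volume {x ∈ Set.Icc (0:ℝ) 1 | ENNReal.ofReal t ≤ locSlope f x}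

/-- Total variation of `f` on `[0,1]`. -/
noncomputable def totalVar (f : ℝ → ℝ) : ℝ≥0∞ := eVariationOn f (Set.Icc 0 1)

lemma le_locSlope (f : ℝ → ℝ) {x x' : ℝ} (h1 : x' ∈ Set.Icc (0:ℝ) 1) (h2 : x' ≠ x) :
    ENNReal.ofReal (|f x - f x'| / |x - x'|) ≤ locSlope f x :=
  le_iSup_of_le x' (le_iSup_of_le h1 (le_iSup_of_le h2 le_rfl))

/-- Upper bound on the local slope of the step function. -/
lemma step_locSlope_le {x : ℝ} :
    locSlope (fun x => if 1 / 2 < x then (1 : ℝ) else 0) x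
      ≤ (ENNReal.ofReal |x - 1/2|)⁻¹ := by
  refine iSup_le fun x' => iSup_le fun hx' => iSup_le fun hne => ?_
  dsimp only
  by_cases hfx : (if 1 / 2 < x then (1:ℝ) else 0) = (if 1 / 2 < x' then (1:ℝ) else 0)
  · rw [hfx, sub_self, abs_zero, zero_div, ENNReal.ofReal_zero]
    exact zero_le
  -- the two points are on opposite sides of 1/2
  have hxx' : |x - 1/2| ≤ |x - x'| := by
    by_cases hx : (1:ℝ)/2 < x <;> by_cases hx2 : (1:ℝ)/2 < x'
    · exact absurd (by rw [if_pos hx, if_pos hx2]) hfx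
    · push_neg at hx2
      rw [abs_of_pos (by linarith), abs_of_pos (by linarith)]; linarith
    · push_neg at hx
      rw [abs_of_nonpos (by linarith), abs_of_neg (by linarith)]; linarith
    · exact absurd (by rw [if_neg hx, if_neg hx2]) hfx
  have hnum : |(if 1 / 2 < x then (1:ℝ) else 0) - if 1 / 2 < x' then (1:ℝ) else 0| ≤ 1 := by
    split_ifs <;> norm_num
  have hpos : 0 < |x - x'| := abs_pos.mpr (sub_ne_zero.mpr (Ne.symm hne))
  calc ENNReal.ofReal (|(if 1 / 2 < x then (1:ℝ) else 0) - if 1 / 2 < x' then (1:ℝ) else 0|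
          / |x - x'|)
      ≤ ENNReal.ofReal (1 / |x - x'|) :=
        ENNReal.ofReal_le_ofReal (by gcongr)
    _ = (ENNReal.ofReal |x - x'|)⁻¹ := by
        rw [one_div, ENNReal.ofReal_inv_of_pos hpos]
    _ ≤ (ENNReal.ofReal |x - 1/2|)⁻¹ := by gcongr

/-- The step function `f = 𝟙(x > 1/2)` satisfies `V(f) = 1`, `‖f‖_s = ∞`, `‖f‖_w = 2`. -/
theorem step_function_properties :
    totalVar (fun x => if 1 / 2 < x then (1 : ℝ) else 0) = 1 ∧
    strongNorm (fun x => if 1 / 2 < x then (1 : ℝ) else 0) = ⊤ ∧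
    weakNorm (fun x => if 1 / 2 < x then (1 : ℝ) else 0) = 2 := by
  set f : ℝ → ℝ := fun x => if 1 / 2 < x then (1 : ℝ) else 0 with hf
  have h0 : (0:ℝ) ∈ Set.Icc (0:ℝ) 1 := ⟨le_refl 0, by norm_num⟩
  have h1 : (1:ℝ) ∈ Set.Icc (0:ℝ) 1 := ⟨by norm_num, le_refl 1⟩
  have hhalf : (1/2:ℝ) ∈ Set.Icc (0:ℝ) 1 := ⟨by norm_num, by norm_num⟩
  refine ⟨?_, ?_, ?_⟩
  · -- total variation = 1
    have hmono : MonotoneOn f (Set.Icc 0 1) := by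
      intro a _ b _ hab
      simp only [hf]
      split_ifs with h1 h2 h3
      · exact le_rfl
      · exact ((h2 (h1.trans_le hab)).elim : (1:ℝ) ≤ 0)
      · norm_num
      · exact le_rfl
    apply le_antisymm
    · have := hmono.eVariationOn_le h0 h1
      rw [Set.inter_self] at this
      refine le_trans this ?_
      simp only [hf]
      norm_num
    · have := eVariationOn.edist_le f h0 h1
      refine le_trans ?_ this
      simp only [hf, edist_dist, Real.dist_eq]
      norm_num
  · -- strong norm = ⊤
    rw [eq_top_iff]
    have key : ∀ x ∈ Set.Ioc (1/2:ℝ) 1, ENNReal.ofReal ((x - 1/2)⁻¹) ≤ locSlope f x := by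
      intro x hx
      have := le_locSlope f (x := x) hhalf (by intro h; rw [h] at hx; exact lt_irrefl _ hx.1)
      refine le_trans (le_of_eq ?_) this
      have : f x = 1 := if_pos hx.1
      have h2 : f (1/2) = 0 := if_neg (lt_irrefl _)
      rw [this, h2, abs_of_pos (by linarith [hx.1] : (0:ℝ) < x - 1/2)]
      norm_num
    have hsub : Set.Ioc (1/2:ℝ) 1 ⊆ Set.Icc (0:ℝ) 1 := fun y hy => ⟨by linarith [hy.1], hy.2⟩
    calc (⊤ : ℝ≥0∞) = ∫⁻ x in Set.Ioc (1/2:ℝ) 1, ENNReal.ofReal ((x - 1/2)⁻¹) := by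
          by_contra h
          have hne : (∫⁻ x in Set.Ioc (1/2:ℝ) 1, ENNReal.ofReal ((x - 1/2)⁻¹)) ≠ ⊤ :=
            fun ht => h ht.symm
          have hint : IntegrableOn (fun x : ℝ => (x - 1/2)⁻¹) (Set.Ioc (1/2) 1) volume := by
            constructor
            · exact ((measurable_id.sub measurable_const).inv).aestronglyMeasurable
            · rw [hasFiniteIntegral_iff_ofReal]
              · exact lt_top_iff_ne_top.mpr hne
              · filter_upwards [ae_restrict_mem measurableSet_Ioc] with x hx
                exact inv_nonneg.mpr (by linarith [hx.1])
          have : IntervalIntegrable (fun x : ℝ => (x - 1/2)⁻¹) volume (1/2) 1 := by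
            rw [intervalIntegrable_iff_integrableOn_Ioc_of_le (by norm_num)]
            exact hint
          rcases intervalIntegrable_sub_inv_iff.mp this with h' | h'
          · norm_num at h'
          · exact h' (by rw [Set.uIcc_of_le (by norm_num)]; exact ⟨le_rfl, by norm_num⟩)
      _ ≤ ∫⁻ x in Set.Ioc (1/2:ℝ) 1, locSlope f x := by
          refine lintegral_mono_ae ?_
          filter_upwards [ae_restrict_mem measurableSet_Ioc] with x hx
          exact key x hx
      _ ≤ strongNorm f := lintegral_mono' (Measure.restrict_mono hsub le_rfl) le_rfl
  · -- weak norm = 2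
    apply le_antisymm
    · refine iSup_le fun t => iSup_le fun ht => ?_
      have hsubset : {x ∈ Set.Icc (0:ℝ) 1 | ENNReal.ofReal t ≤ locSlope f x}
          ⊆ Set.Icc (1/2 - t⁻¹) (1/2 + t⁻¹) := by
        rintro x ⟨hx, hslope⟩
        have hstep : locSlope f x ≤ (ENNReal.ofReal |x - 1/2|)⁻¹ := by
          rw [hf]; exact step_locSlope_le
        have h2 : ENNReal.ofReal t ≤ (ENNReal.ofReal |x - 1/2|)⁻¹ :=
          hslope.trans hstep
        have h3 : ENNReal.ofReal |x - 1/2| ≤ (ENNReal.ofReal t)⁻¹ :=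
          ENNReal.le_inv_iff_le_inv.mp h2
        rw [← ENNReal.ofReal_inv_of_pos ht] at h3
        have h4 : |x - 1/2| ≤ t⁻¹ :=
          (ENNReal.ofReal_le_ofReal_iff (by positivity)).mp h3
        rw [abs_le] at h4
        constructor <;> linarith [h4.1, h4.2]
      rcases le_or_gt t 2 with hle | hgt
      · have : volume {x ∈ Set.Icc (0:ℝ) 1 | ENNReal.ofReal t ≤ locSlope f x} ≤ 1 := by
          refine le_trans (measure_mono (fun x hx => hx.1)) ?_
          rw [Real.volume_Icc]; norm_num
        calc ENNReal.ofReal t * volume {x ∈ Set.Icc (0:ℝ) 1 | ENNReal.ofReal t ≤ locSlope f x}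
            ≤ ENNReal.ofReal t * 1 := mul_le_mul_right this _
          _ = ENNReal.ofReal t := mul_one _
          _ ≤ ENNReal.ofReal 2 := ENNReal.ofReal_le_ofReal hle
          _ = 2 := by norm_num
      · calc ENNReal.ofReal t * volume {x ∈ Set.Icc (0:ℝ) 1 | ENNReal.ofReal t ≤ locSlope f x}
            ≤ ENNReal.ofReal t * volume (Set.Icc (1/2 - t⁻¹) (1/2 + t⁻¹)) :=
              mul_le_mul_right (measure_mono hsubset) _
          _ = ENNReal.ofReal t * ENNReal.ofReal (2 * t⁻¹) := by
              rw [Real.volume_Icc]; ring_nf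
          _ = ENNReal.ofReal (t * (2 * t⁻¹)) := (ENNReal.ofReal_mul ht.le).symm
          _ = 2 := by
              rw [show t * (2 * t⁻¹) = 2 by field_simp]
              norm_num
    · -- lower bound: take t = 4
      have hset : Set.Ioo (1/4 : ℝ) (3/4)
          ⊆ {x ∈ Set.Icc (0:ℝ) 1 | ENNReal.ofReal 4 ≤ locSlope f x} := by
        rintro x ⟨hx1, hx2⟩
        refine ⟨⟨by linarith, by linarith⟩, ?_⟩
        rcases le_or_gt x (1/2) with hle | hgt
        · have hmem : x + 1/4 ∈ Set.Icc (0:ℝ) 1 := ⟨by linarith, by linarith⟩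
          have hne : x + 1/4 ≠ x := by intro h; linarith
          refine le_trans (le_of_eq ?_) (le_locSlope f hmem hne)
          have hfx : f x = 0 := if_neg (not_lt.mpr hle)
          have hfx' : f (x + 1/4) = 1 := if_pos (by linarith)
          rw [hfx, hfx', show x - (x + 1/4) = -(1/4:ℝ) by ring]
          rw [show |(0:ℝ) - 1| = 1 by norm_num, show |(-(1/4):ℝ)| = 1/4 by norm_num]
          norm_num [ENNReal.ofReal_ofNat]
        · have hmem : x - 1/4 ∈ Set.Icc (0:ℝ) 1 := ⟨by linarith, by linarith⟩
          have hne : x - 1/4 ≠ x := by intro h; linarith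
          refine le_trans (le_of_eq ?_) (le_locSlope f hmem hne)
          have hfx : f x = 1 := if_pos hgt
          have hfx' : f (x - 1/4) = 0 := if_neg (by push_neg; linarith)
          rw [hfx, hfx', show x - (x - 1/4) = (1/4:ℝ) by ring]
          rw [show |(1:ℝ) - 0| = 1 by norm_num, show |(1/4:ℝ)| = 1/4 by norm_num]
          norm_num [ENNReal.ofReal_ofNat]
      have h4 : (2:ℝ≥0∞) ≤ ENNReal.ofReal 4 *
          volume {x ∈ Set.Icc (0:ℝ) 1 | ENNReal.ofReal 4 ≤ locSlope f x} := by
        calc (2:ℝ≥0∞) = ENNReal.ofReal 4 * volume (Set.Ioo (1/4 : ℝ) (3/4)) := by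
              rw [Real.volume_Ioo]
              rw [show (3/4 : ℝ) - 1/4 = 1/2 by norm_num]
              rw [show (2:ℝ≥0∞) = ENNReal.ofReal 2 by norm_num,
                ← ENNReal.ofReal_mul (by norm_num : (0:ℝ) ≤ 4)]
              norm_num
          _ ≤ _ := mul_le_mul_right (measure_mono hset) _
      exact le_trans h4 (le_iSup_of_le 4 (le_iSup_of_le (by norm_num) le_rfl))
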